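/- Suppose dim V = 3. If L is a Lagrangian subspace of V ⊕ V* with dim(L ∩ V*) odd, then the type of L is (0,1), (0,3), or (2,1); that is, (dim(L ∩ V), dim(L ∩ V*)) ∈ {(0,1), (0,3), (2,1)}. -/

import Mathlib

/-- The canonical split-signature pairing on `V ⊕ V*`. -/
noncomputable def diracPairing {V : Type*} [AddCommGroup V] [Module ℝ V]
    (x y : V × Module.Dual ℝ V) : ℝ :=
  (x.2 y.1 + y.2 x.1) / 2

/-- `L ⊆ V ⊕ V*` is Lagrangian: `dim L = dim V` and the pairing vanishes on `L`. -/
def IsLagrangian {V : Type*} [AddCommGroup V] [Module ℝ V]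
    (L : Submodule ℝ (V × Module.Dual ℝ V)) : Prop :=
  Module.finrank ℝ L = Module.finrank ℝ V ∧
    ∀ x ∈ L, ∀ y ∈ L, diracPairing x y = 0

/-- The type of a Lagrangian `L`: the pair `(dim(L ∩ V), dim(L ∩ V*))`. -/
noncomputable def lagType {V : Type*} [AddCommGroup V] [Module ℝ V]
    (L : Submodule ℝ (V × Module.Dual ℝ V)) : ℕ × ℕ :=
  (Module.finrank ℝ ↥(L ⊓ LinearMap.range (LinearMap.inl ℝ V (Module.Dual ℝ V))),
   Module.finrank ℝ ↥(L ⊓ LinearMap.range (LinearMap.inr ℝ V (Module.Dual ℝ V))))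

open Module LinearMap

universe u

/-- A nondegenerate alternating bilinear form forces even dimension. -/
private theorem even_finrank_of_alt_nondeg :
    ∀ (n : ℕ) {V : Type u} [AddCommGroup V] [Module ℝ V] [FiniteDimensional ℝ V]
      (B : LinearMap.BilinForm ℝ V), Module.finrank ℝ V = n → B.IsAlt → B.Nondegenerate →
      Even n := by
  intro n
  induction n using Nat.strong_induction_on with
  | _ n ih =>
    intro V _ _ _ B hn halt hnd
    by_cases hB : B = 0
    · have hsub : Subsingleton V := ⟨fun a b => by
        rw [hnd.1 a (by simp [hB]), hnd.1 b (by simp [hB])]⟩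
      rw [← hn, finrank_zero_iff.mpr hsub]
      exact ⟨0, rfl⟩
    · obtain ⟨u, hu⟩ : ∃ u, B u ≠ 0 := by
        by_contra h
        push_neg at h
        exact hB (by ext x y; simp [h x])
      obtain ⟨v, huv⟩ : ∃ v, B u v ≠ 0 := by
        by_contra h
        push_neg at h
        exact hu (by ext y; simp [h y])
      set P : Submodule ℝ V := Submodule.span ℝ {u, v} with hP
      have hli : LinearIndependent ℝ ![u, v] := by
        rw [LinearIndependent.pair_iff]
        intro s t hst
        have h1 : B (s • u + t • v) v = 0 := by rw [hst]; simp
        have h2 : B (s • u + t • v) u = 0 := by rw [hst]; simp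
        simp only [map_add, map_smul, LinearMap.add_apply, LinearMap.smul_apply,
          halt.self_eq_zero, smul_eq_mul, mul_zero, add_zero, zero_add] at h1 h2
        have hvu : B v u = -B u v := (LinearMap.IsAlt.neg halt u v).symm
        constructor
        · have := h1
          rcases mul_eq_zero.mp h1 with h | h
          · exact h
          · exact absurd h huv
        · rw [hvu] at h2
          rcases mul_eq_zero.mp h2 with h | h
          · exact h
          · exact absurd (neg_eq_zero.mp h) huv
      have hPrank : finrank ℝ P = 2 := by
        have : ({u, v} : Set V) = Set.range ![u, v] := by
          rw [Set.pair_comm]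
          simp [Matrix.range_cons, Matrix.range_empty]
        rw [hP, this, finrank_span_eq_card hli]
        simp
      have hPnd : (B.restrict P).Nondegenerate := by
        refine (LinearMap.IsRefl.nondegenerate_iff_separatingLeft
          (LinearMap.IsAlt.isRefl (B := B.restrict P) (fun x => halt x))).mpr ?_
        rintro ⟨x, hx⟩ h
        obtain ⟨a, b, hab⟩ := Submodule.mem_span_pair.mp hx
        have hu' : u ∈ P := Submodule.subset_span (by simp)
        have hv' : v ∈ P := Submodule.subset_span (by simp)
        have h1 : B x v = 0 := h ⟨v, hv'⟩
        have h2 : B x u = 0 := h ⟨u, hu'⟩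
        rw [← hab] at h1 h2
        simp only [map_add, map_smul, LinearMap.add_apply, LinearMap.smul_apply,
          halt.self_eq_zero, smul_eq_mul, mul_zero, add_zero, zero_add] at h1 h2
        have ha : a = 0 := by
          rcases mul_eq_zero.mp h1 with h | h
          · exact h
          · exact absurd h huv
        have hb : b = 0 := by
          rcases mul_eq_zero.mp h2 with h | h
          · exact h
          · exact absurd (neg_eq_zero.mp ((LinearMap.IsAlt.neg halt u v).trans h)) huv
        ext
        simp [← hab, ha, hb]
      have hcompl : IsCompl P (B.orthogonal P) :=
        B.isCompl_orthogonal_of_restrict_nondegenerate halt.isRefl hPnd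
      set Q := B.orthogonal P with hQ
      have hdim : finrank ℝ P + finrank ℝ Q = n := by
        rw [Submodule.finrank_add_eq_of_isCompl hcompl, hn]
      have halt' : (B.restrict Q).IsAlt := fun x => halt x
      have hnd' : (B.restrict Q).Nondegenerate := by
        refine (LinearMap.IsRefl.nondegenerate_iff_separatingLeft halt'.isRefl).mpr ?_
        rintro ⟨x, hx⟩ h
        have hx0 : x = 0 := by
          apply hnd.1
          intro y
          obtain ⟨p, q, hp, hq, rfl⟩ :=
            Submodule.codisjoint_iff_exists_add_eq.mp hcompl.codisjoint y
          have h1 : B x p = 0 := halt.isRefl p x (hx p hp)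
          have h2 : B x q = 0 := h ⟨q, hq⟩
          simp [h1, h2]
        exact Subtype.ext hx0
      have hQrank : finrank ℝ Q = n - 2 := by omega
      have hlt : n - 2 < n := by omega
      have : Even (n - 2) := ih (n - 2) hlt (B.restrict Q) hQrank halt' hnd'
      obtain ⟨k, hk⟩ := this
      exact ⟨k + 1, by omega⟩

/-- An alternating bilinear form has even rank. -/
private theorem even_rank_of_alt {V : Type u} [AddCommGroup V] [Module ℝ V]
    [FiniteDimensional ℝ V] (B : LinearMap.BilinForm ℝ V) (halt : B.IsAlt) :
    Even (finrank ℝ V - finrank ℝ (LinearMap.ker B)) := by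
  obtain ⟨C, hC⟩ := Submodule.exists_isCompl (LinearMap.ker B)
  have hnd : (B.restrict C).Nondegenerate := by
    refine (LinearMap.IsRefl.nondegenerate_iff_separatingLeft
      (LinearMap.IsAlt.isRefl (B := B.restrict C) (fun x => halt x))).mpr ?_
    rintro ⟨x, hx⟩ h
    have hxk : x ∈ LinearMap.ker B := by
      rw [LinearMap.mem_ker]
      ext y
      obtain ⟨p, q, hp, hq, rfl⟩ := Submodule.codisjoint_iff_exists_add_eq.mp hC.codisjoint y
      have hp0 : B p = 0 := hp
      have h1 : B x p = 0 := LinearMap.IsAlt.isRefl halt p x (by simp [hp0])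
      have h2 : B x q = 0 := h ⟨q, hq⟩
      simp [h1, h2]
    have : x ∈ LinearMap.ker B ⊓ C := ⟨hxk, hx⟩
    rw [hC.inf_eq_bot] at this
    exact Subtype.ext this
  have hev := even_finrank_of_alt_nondeg (finrank ℝ C) (B.restrict C) rfl
    (fun x => halt x) hnd
  have hadd := Submodule.finrank_add_eq_of_isCompl hC
  have : finrank ℝ V - finrank ℝ (LinearMap.ker B) = finrank ℝ C := by omega
  rw [this]
  exact hev

/-- The Dirac pairing as a bilinear form. -/
private noncomputable def dirF (V : Type u) [AddCommGroup V] [Module ℝ V] :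
    LinearMap.BilinForm ℝ (V × Module.Dual ℝ V) :=
  LinearMap.mk₂ ℝ (fun x y => (x.2 y.1 + y.2 x.1) / 2)
    (fun x x' y => by simp; ring)
    (fun a x y => by simp; ring)
    (fun x y y' => by simp; ring)
    (fun a x y => by simp; ring)

private theorem dirF_apply {V : Type u} [AddCommGroup V] [Module ℝ V]
    (x y : V × Module.Dual ℝ V) : dirF V x y = (x.2 y.1 + y.2 x.1) / 2 := rfl

/-- The canonical "evaluation" form. -/
private noncomputable def omF (V : Type u) [AddCommGroup V] [Module ℝ V] :
    LinearMap.BilinForm ℝ (V × Module.Dual ℝ V) :=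
  LinearMap.mk₂ ℝ (fun x y => x.2 y.1)
    (fun x x' y => by simp)
    (fun a x y => by simp)
    (fun x y y' => by simp)
    (fun a x y => by simp)

private theorem omF_apply {V : Type u} [AddCommGroup V] [Module ℝ V]
    (x y : V × Module.Dual ℝ V) : omF V x y = x.2 y.1 := rfl

/-- If the vanishing set of an alternating-on-`L` form `Ω` against `L` is `S ≤ L`,
then `dim L - dim S` (the rank of the restriction) is even. -/
private theorem even_ker_restrict {W : Type u} [AddCommGroup W] [Module ℝ W]
    [FiniteDimensional ℝ W] (Ω : LinearMap.BilinForm ℝ W) (L S : Submodule ℝ W)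
    (hSle : S ≤ L) (halt : ∀ x ∈ L, Ω x x = 0)
    (hker : ∀ x ∈ L, ((∀ y ∈ L, Ω x y = 0) ↔ x ∈ S)) :
    Even (finrank ℝ L - finrank ℝ S) := by
  have hωalt : (Ω.restrict L).IsAlt := fun x => halt x x.2
  have hk : LinearMap.ker (Ω.restrict L) = S.comap L.subtype := by
    ext ⟨x, hx⟩
    simp only [LinearMap.mem_ker, Submodule.mem_comap, Submodule.coe_subtype]
    rw [← hker x hx]
    constructor
    · intro h y hy
      simpa using LinearMap.congr_fun h ⟨y, hy⟩
    · intro h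
      ext ⟨y, hy⟩
      simpa using h y hy
  have hev := even_rank_of_alt (Ω.restrict L) hωalt
  rwa [hk, (Submodule.comapSubtypeEquivOfLe hSle).finrank_eq] at hev

set_option maxHeartbeats 1000000 in
/-- For `dim V = 3`: an odd Lagrangian has type `(0,1)`, `(0,3)`, or `(2,1)`. -/
theorem odd_lagrangian_types_dim_three
    (V : Type*) [AddCommGroup V] [Module ℝ V] [FiniteDimensional ℝ V]
    (hdim : Module.finrank ℝ V = 3)
    (L : Submodule ℝ (V × Module.Dual ℝ V)) (hL : IsLagrangian L)
    (hodd : Odd (lagType L).2) :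
    lagType L ∈ ({(0, 1), (0, 3), (2, 1)} : Set (ℕ × ℕ)) := by
  obtain ⟨hLrank, hiso⟩ := hL
  -- basic facts about the Dirac form
  have hrefl : (dirF V).IsRefl := fun x y h => by
    rw [dirF_apply] at h ⊢
    linarith
  have hnd : (dirF V).Nondegenerate := by
    refine (LinearMap.IsRefl.nondegenerate_iff_separatingLeft hrefl).mpr ?_
    intro x hx
    have h2 : x.2 = 0 := by
      ext w
      have := hx (w, 0)
      rw [dirF_apply] at this
      simp at this
      simpa using this
    have h1 : x.1 = 0 := by
      rw [← Module.forall_dual_apply_eq_zero_iff ℝ x.1]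
      intro φ
      have := hx (0, φ)
      rw [dirF_apply] at this
      simp at this
      simpa using this
    exact Prod.ext h1 h2
  have hWrank : finrank ℝ (V × Module.Dual ℝ V) = 6 := by
    rw [Module.finrank_prod, Subspace.dual_finrank_eq, hdim]
  have hL3 : finrank ℝ L = 3 := by rw [hLrank, hdim]
  -- maximality: L equals its own orthogonal
  have hle : L ≤ (dirF V).orthogonal L := by
    intro x hx
    rw [LinearMap.BilinForm.mem_orthogonal_iff]
    intro y hy
    exact hiso y hy x hx
  have horth_rank : finrank ℝ ((dirF V).orthogonal L) = 3 := by
    rw [LinearMap.BilinForm.finrank_orthogonal hnd, hWrank, hL3]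
  have hmax : L = (dirF V).orthogonal L :=
    Submodule.eq_of_le_of_finrank_le hle (by rw [horth_rank, hL3])
  -- the subspace (L ∩ V) ⊔ (L ∩ V*)
  set S : Submodule ℝ (V × Module.Dual ℝ V) :=
    (L ⊓ LinearMap.range (LinearMap.inl ℝ V (Module.Dual ℝ V))) ⊔
      (L ⊓ LinearMap.range (LinearMap.inr ℝ V (Module.Dual ℝ V))) with hS
  have hSle : S ≤ L := sup_le inf_le_left inf_le_left
  -- S is exactly the radical of the evaluation form on L
  have hker : ∀ x ∈ L, ((∀ y ∈ L, omF V x y = 0) ↔ x ∈ S) := by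
    intro x hxL
    constructor
    · intro h
      have hvan : ∀ y ∈ L, x.2 y.1 = 0 := by
        intro y hy
        have := h y hy
        rwa [omF_apply] at this
      have hz : ((0 : V), x.2) ∈ L := by
        rw [hmax, LinearMap.BilinForm.mem_orthogonal_iff]
        intro y hy
        show dirF V y ((0 : V), x.2) = 0
        rw [dirF_apply]
        simp [hvan y hy]
      have hxz : x - ((0 : V), x.2) ∈
          L ⊓ LinearMap.range (LinearMap.inl ℝ V (Module.Dual ℝ V)) := by
        refine ⟨Submodule.sub_mem L hxL hz, ⟨x.1, ?_⟩⟩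
        ext <;> simp
      have hz' : ((0 : V), x.2) ∈
          L ⊓ LinearMap.range (LinearMap.inr ℝ V (Module.Dual ℝ V)) :=
        ⟨hz, ⟨x.2, rfl⟩⟩
      have := Submodule.add_mem_sup hxz hz'
      simpa [hS] using this
    · intro hx y hy
      rw [hS, Submodule.mem_sup] at hx
      obtain ⟨a, ⟨haL, ⟨w, hw⟩⟩, b, ⟨hbL, ⟨ξ, hξ⟩⟩, hab⟩ := hx
      have ha2 : a.2 = 0 := by rw [← hw]; rfl
      have hb1 : b.1 = 0 := by rw [← hξ]; rfl
      have hbv : b.2 y.1 = 0 := by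
        have := hiso b hbL y hy
        rw [diracPairing, hb1] at this
        simp at this
        linarith [this]
      rw [omF_apply, ← hab]
      show (a + b).2 y.1 = 0
      rw [Prod.snd_add, LinearMap.add_apply, ha2, hbv]
      simp
  -- alternation of the evaluation form on L
  have halt : ∀ x ∈ L, omF V x x = 0 := by
    intro x hx
    have := hiso x hx x hx
    rw [diracPairing] at this
    rw [omF_apply]
    linarith
  have heven := even_ker_restrict (omF V) L S hSle halt hker
  -- dimension bookkeeping
  have hinf : (L ⊓ LinearMap.range (LinearMap.inl ℝ V (Module.Dual ℝ V))) ⊓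
      (L ⊓ LinearMap.range (LinearMap.inr ℝ V (Module.Dual ℝ V))) = ⊥ := by
    rw [eq_bot_iff]
    rintro x ⟨⟨-, ⟨v, hv⟩⟩, ⟨-, ⟨ξ, hξ⟩⟩⟩
    have h1 : x.1 = 0 := by rw [← hξ]; rfl
    have h2 : x.2 = 0 := by rw [← hv]; rfl
    simp only [Submodule.mem_bot]
    exact Prod.ext h1 h2
  have hsum := Submodule.finrank_sup_add_finrank_inf_eq
    (L ⊓ LinearMap.range (LinearMap.inl ℝ V (Module.Dual ℝ V)))
    (L ⊓ LinearMap.range (LinearMap.inr ℝ V (Module.Dual ℝ V)))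
  rw [hinf, finrank_bot, add_zero] at hsum
  have hSL : finrank ℝ S ≤ 3 := by
    rw [← hL3]
    exact Submodule.finrank_mono hSle
  rw [hL3] at heven
  obtain ⟨k, hk⟩ := heven
  obtain ⟨m, hm⟩ := hodd
  simp only [lagType] at hm ⊢
  simp only [Set.mem_insert_iff, Set.mem_singleton_iff, Prod.mk.injEq]
  rw [← hS] at hsum
  omega
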